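/- Let G be a subgroup of SL(2,ℂ) with no common eigenvector, and let Ḡ denote its image in PSL(2,ℂ). Then the centralizer of Ḡ in PSL(2,ℂ) is nontrivial if and only if the conjugation action of G on sl(2,ℂ) (the space of trace-zero 2×2 complex matrices, G acting by X ↦ g X g⁻¹) admits a ℂ-subspace that is invariant under this action and is neither 0 nor all of sl(2,ℂ). -/

import Mathlib

open Matrix

/-- `PSL(2,ℂ)`: the quotient of `SL(2,ℂ)` by its center `{I, −I}`. -/
abbrev PSL2 : Type :=
  SpecialLinearGroup (Fin 2) ℂ ⧸ Subgroup.center (SpecialLinearGroup (Fin 2) ℂ)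

/-- The canonical projection `SL(2,ℂ) → PSL(2,ℂ)`. -/
abbrev pslProj : SpecialLinearGroup (Fin 2) ℂ →* PSL2 :=
  QuotientGroup.mk' (Subgroup.center (SpecialLinearGroup (Fin 2) ℂ))

/-- `sl(2,ℂ)`: the complex vector space of trace-zero `2 × 2` complex matrices. -/
noncomputable def sl2 : Submodule ℂ (Matrix (Fin 2) (Fin 2) ℂ) :=
  LinearMap.ker (Matrix.traceLinearMap (Fin 2) ℂ ℂ)

namespace Sl2Aux

open Module

abbrev M2 := Matrix (Fin 2) (Fin 2) ℂ
abbrev SL2 := SpecialLinearGroup (Fin 2) ℂ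

lemma mem_sl2 {X : M2} : X ∈ sl2 ↔ X.trace = 0 := by
  simp [sl2, LinearMap.mem_ker]
lemma coe_mul_coe_inv (g : SL2) : (g : M2) * ((g⁻¹ : SL2) : M2) = 1 := by
  rw [← Matrix.SpecialLinearGroup.coe_mul, mul_inv_cancel, Matrix.SpecialLinearGroup.coe_one]
lemma coe_inv_mul_coe (g : SL2) : ((g⁻¹ : SL2) : M2) * (g : M2) = 1 := by
  rw [← Matrix.SpecialLinearGroup.coe_mul, inv_mul_cancel, Matrix.SpecialLinearGroup.coe_one]
lemma conj_mul (g k : SL2) (X : M2) :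
    ((g * k : SL2) : M2) * X * (((g * k)⁻¹ : SL2) : M2)
      = (g : M2) * ((k : M2) * X * ((k⁻¹ : SL2) : M2)) * ((g⁻¹ : SL2) : M2) := by
  rw [_root_.mul_inv_rev, Matrix.SpecialLinearGroup.coe_mul, Matrix.SpecialLinearGroup.coe_mul]
  noncomm_ring
lemma trace_conj' (g : SL2) (X : M2) :
    ((g : M2) * X * ((g⁻¹ : SL2) : M2)).trace = X.trace := by
  rw [Matrix.trace_mul_comm, ← mul_assoc, coe_inv_mul_coe, one_mul]
lemma central_coe (z : SL2) (hz : z ∈ Subgroup.center SL2) :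
    ∃ r : ℂ, r ^ 2 = 1 ∧ (z : M2) = r • 1 := by
  obtain ⟨r, hr, hr'⟩ := Matrix.SpecialLinearGroup.mem_center_iff.mp hz
  refine ⟨r, by simpa using hr, ?_⟩
  rw [← hr', Matrix.scalar_apply, Matrix.smul_one_eq_diagonal]
lemma conj_central (z : SL2) (hz : z ∈ Subgroup.center SL2) (X : M2) :
    (z : M2) * X * ((z⁻¹ : SL2) : M2) = X := by
  obtain ⟨r, hr, hr'⟩ := central_coe z hz
  obtain ⟨r', hr2, hr2'⟩ := central_coe z⁻¹ (Subgroup.inv_mem _ hz)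
  have h1 : (z : M2) * ((z⁻¹ : SL2) : M2) = 1 := coe_mul_coe_inv z
  rw [hr', hr2'] at h1 ⊢
  have hrr : (r * r') = 1 := by
    have := Matrix.ext_iff.2 h1 0 0
    simpa [mul_comm] using this
  calc r • (1 : M2) * X * (r' • 1) = (r * r') • X := by
        simp [Matrix.smul_mul, Matrix.mul_smul, smul_smul, mul_comm]
    _ = X := by rw [hrr, one_smul]


lemma scalar_of_conj_smul (H : M2) (μ : ℂ) (hdet : H.det = 1)
    (h1 : H * !![0,1;0,0] = μ • (!![0,1;0,0] * H))
    (h2 : H * !![0,0;1,0] = μ • (!![0,0;1,0] * H))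
    (h3 : H * !![1,0;0,-1] = μ • (!![1,0;0,-1] * H)) :
    ∃ r : ℂ, H = r • 1 := by
  have q11 := Matrix.ext_iff.2 h1 0 1
  have q10 := Matrix.ext_iff.2 h1 1 1
  have q00 := Matrix.ext_iff.2 h2 0 0
  have q21 := Matrix.ext_iff.2 h2 1 0
  have q3 := Matrix.ext_iff.2 h3 0 0
  simp [Matrix.mul_apply, Fin.sum_univ_two, Matrix.vecMul, dotProduct]
    at q11 q10 q00 q21 q3
  have hd : H 0 0 * H 1 1 = 1 := by
    have := Matrix.det_fin_two H
    rw [hdet, q10, q00] at this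
    simp at this; linear_combination -this
  have h00 : H 0 0 ≠ 0 := by
    intro h; rw [h, zero_mul] at hd; exact one_ne_zero hd.symm
  have hμ : μ = 1 := by
    rcases mul_eq_mul_right_iff.1 (q3.symm.trans (one_mul (H 0 0)).symm) with h | h
    · exact h
    · exact absurd h h00
  refine ⟨H 0 0, ?_⟩
  ext i j
  fin_cases i <;> fin_cases j <;>
    simp [q10, q00, Matrix.one_apply]
  rw [q21, hμ, one_mul]

/-- Commuting trace-zero 2×2 matrices are proportional. -/
lemma commute_trace_zero (X Y : M2) (hX : X.trace = 0) (hY : Y.trace = 0)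
    (hXY : X * Y = Y * X) (hX0 : X ≠ 0) : ∃ t : ℂ, Y = t • X := by
  have hX11 : X 1 1 = -X 0 0 := by
    have := hX; rw [Matrix.trace_fin_two] at this; linear_combination this
  have hY11 : Y 1 1 = -Y 0 0 := by
    have := hY; rw [Matrix.trace_fin_two] at this; linear_combination this
  have e00 := Matrix.ext_iff.2 hXY 0 0
  have e01 := Matrix.ext_iff.2 hXY 0 1
  have e10 := Matrix.ext_iff.2 hXY 1 0
  simp [Matrix.mul_apply, Fin.sum_univ_two, hX11, hY11] at e00 e01 e10
  have E1 : X 0 0 * Y 0 1 = X 0 1 * Y 0 0 := by linear_combination e01 / 2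
  have E2 : X 1 0 * Y 0 0 = X 0 0 * Y 1 0 := by linear_combination e10 / 2
  have E3 : X 0 1 * Y 1 0 = X 1 0 * Y 0 1 := by linear_combination e00
  have key : ∀ t : ℂ, Y 0 0 = t * X 0 0 → Y 0 1 = t * X 0 1 → Y 1 0 = t * X 1 0 →
      ∃ t : ℂ, Y = t • X := by
    intro t h1 h2 h3
    refine ⟨t, ?_⟩
    ext i j
    fin_cases i <;> fin_cases j <;>
      simp [hY11, hX11, h1, h2, h3, mul_neg]
  by_cases hA : X 0 0 ≠ 0
  · refine key (Y 0 0 / X 0 0) (by field_simp) ?_ ?_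
    · field_simp; linear_combination E1
    · field_simp; linear_combination -E2
  · push_neg at hA
    by_cases hB : X 0 1 ≠ 0
    · refine key (Y 0 1 / X 0 1) ?_ (by field_simp) ?_
      · rw [hA, mul_zero]
        have : X 0 1 * Y 0 0 = 0 := by linear_combination -E1 + Y 0 1 * hA
        exact (mul_eq_zero.1 this).resolve_left hB
      · field_simp; linear_combination E3
    · push_neg at hB
      have hC : X 1 0 ≠ 0 := by
        intro hC
        apply hX0
        ext i j
        fin_cases i <;> fin_cases j <;> simp [hX11, hA, hB, hC]
      refine key (Y 1 0 / X 1 0) ?_ ?_ (by field_simp)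
      · rw [hA, mul_zero]
        have : X 1 0 * Y 0 0 = 0 := by linear_combination E2 + Y 1 0 * hA
        exact (mul_eq_zero.1 this).resolve_left hC
      · rw [hB, mul_zero]
        have : X 1 0 * Y 0 1 = 0 := by linear_combination -E3 + Y 1 0 * hB
        exact (mul_eq_zero.1 this).resolve_left hC

lemma sq_of_trace_zero (X : M2) (hX : X.trace = 0) : X * X = (-X.det) • 1 := by
  have hX11 : X 1 1 = -X 0 0 := by
    have := hX; rw [Matrix.trace_fin_two] at this; linear_combination this
  have hdet : X.det = X 0 0 * X 1 1 - X 0 1 * X 1 0 := Matrix.det_fin_two X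
  ext i j
  fin_cases i <;> fin_cases j <;>
    simp [Matrix.mul_apply, Fin.sum_univ_two, hX11, hdet, Matrix.one_apply] <;> ring
lemma finrank_sl2 : finrank ℂ sl2 = 3 := by
  have h1 : LinearMap.range (Matrix.traceLinearMap (Fin 2) ℂ ℂ) = ⊤ := by
    rw [LinearMap.range_eq_top]
    intro c
    exact ⟨Matrix.diagonal ![c, 0], by simp [Matrix.trace_fin_two]⟩
  have h2 := LinearMap.finrank_range_add_finrank_ker (Matrix.traceLinearMap (Fin 2) ℂ ℂ)
  rw [h1] at h2
  have h3 : finrank ℂ (⊤ : Submodule ℂ ℂ) = 1 := by simp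
  have h4 : finrank ℂ M2 = 4 := by
    simp [Module.finrank_matrix]
  rw [h3, h4] at h2
  have : sl2 = LinearMap.ker (Matrix.traceLinearMap (Fin 2) ℂ ℂ) := rfl
  rw [this]
  omega

/-- If `X ≠ 0` is a 2×2 matrix and `v` a nonzero kernel vector, the kernel is the line `ℂv`. -/
lemma ker_eq_span (X : M2) (hX0 : X ≠ 0) (v : Fin 2 → ℂ) (hv : v ≠ 0) (hXv : X *ᵥ v = 0) :
    LinearMap.ker X.mulVecLin = Submodule.span ℂ {v} := by
  have hle : Submodule.span ℂ {v} ≤ LinearMap.ker X.mulVecLin := by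
    rw [Submodule.span_singleton_le_iff_mem, LinearMap.mem_ker, Matrix.mulVecLin_apply]
    exact hXv
  have hrange : LinearMap.range X.mulVecLin ≠ ⊥ := by
    intro h
    apply hX0
    have : X.mulVecLin = 0 := LinearMap.range_eq_bot.1 h
    ext i j
    have := congrFun (congrArg DFunLike.coe this) (Pi.single j 1)
    simpa [Matrix.mulVec_single] using congrFun this i
  have h2 := LinearMap.finrank_range_add_finrank_ker X.mulVecLin
  have hrk : 1 ≤ finrank ℂ (LinearMap.range X.mulVecLin) := by
    rcases Nat.eq_zero_or_pos (finrank ℂ (LinearMap.range X.mulVecLin)) with h | h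
    · exact absurd (Submodule.finrank_eq_zero.1 h) hrange
    · exact h
  have hfull : finrank ℂ (Fin 2 → ℂ) = 2 := by simp
  rw [hfull] at h2
  have hker : finrank ℂ (LinearMap.ker X.mulVecLin) ≤ 1 := by omega
  have hspan : finrank ℂ (Submodule.span ℂ {v} : Submodule ℂ (Fin 2 → ℂ)) = 1 :=
    finrank_span_singleton hv
  exact (Submodule.eq_of_le_of_finrank_le hle (by omega)).symm

lemma conj_mul_conj (g : SL2) (A B : M2) :
    ((g : M2) * A * ((g⁻¹ : SL2) : M2)) * ((g : M2) * B * ((g⁻¹ : SL2) : M2))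
      = (g : M2) * (A * B) * ((g⁻¹ : SL2) : M2) := by
  simp only [mul_assoc]
  rw [← mul_assoc ((g⁻¹ : SL2) : M2) (g : M2), coe_inv_mul_coe, one_mul]
lemma span_basis_eq {W : Submodule ℂ M2} {ι : Type*} (b : Basis ι ℂ W) :
    Submodule.span ℂ (Subtype.val '' Set.range b) = W := by
  have h := congrArg (Submodule.map W.subtype) b.span_eq
  rw [Submodule.map_span, Submodule.map_subtype_top] at h
  exact h
lemma exists_invariant_line (G : Subgroup SL2) (W : Submodule ℂ M2) (hle : W ≤ sl2)
    (hinv : ∀ g ∈ G, ∀ X ∈ W, (g : M2) * X * ((g⁻¹ : SL2) : M2) ∈ W)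
    (hbot : W ≠ ⊥) (hne : W ≠ sl2) :
    ∃ X₀ : M2, X₀ ≠ 0 ∧ X₀.trace = 0 ∧
      ∀ g ∈ G, ∃ c : ℂ, (g : M2) * X₀ * ((g⁻¹ : SL2) : M2) = c • X₀ := by
  have hlt : finrank ℂ W < 3 := by
    rw [← finrank_sl2]
    exact Submodule.finrank_lt_finrank_of_lt (lt_of_le_of_ne hle hne)
  have hpos : finrank ℂ W ≠ 0 := fun h => hbot (Submodule.finrank_eq_zero.1 h)
  have hcase : finrank ℂ W = 1 ∨ finrank ℂ W = 2 := by omega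
  rcases hcase with h1 | h2
  · -- dimension 1
    obtain ⟨v, hv0, hvW, hWspan⟩ :
        ∃ v : M2, v ≠ 0 ∧ v ∈ W ∧ W = Submodule.span ℂ {v} := by
      let b : Basis (Fin 1) ℂ W := (Module.finBasis ℂ W).reindex (finCongr h1)
      have h := span_basis_eq b
      rw [Set.range_unique, Set.image_singleton] at h
      exact ⟨↑(b 0), by simpa using b.ne_zero 0, (b 0).2, h.symm⟩
    refine ⟨v, hv0, mem_sl2.1 (hle hvW), fun g hg => ?_⟩
    have hm := hinv g hg v hvW
    rw [hWspan] at hm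
    obtain ⟨c, hc⟩ := Submodule.mem_span_singleton.1 hm
    exact ⟨c, hc.symm⟩
  · -- dimension 2
    obtain ⟨X, Y, hXW, hYW, hX0, hYX, hWspan⟩ :
        ∃ X Y : M2, X ∈ W ∧ Y ∈ W ∧ X ≠ 0 ∧ (∀ t : ℂ, Y ≠ t • X) ∧
          W = Submodule.span ℂ {X, Y} := by
      let b : Basis (Fin 2) ℂ W := (Module.finBasis ℂ W).reindex (finCongr h2)
      have li := b.linearIndependent
      rw [linearIndependent_fin2] at li
      refine ⟨↑(b 0), ↑(b 1), (b 0).2, (b 1).2, by simpa using b.ne_zero 0,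
        ?_, ?_⟩
      · intro t ht
        by_cases ht0 : t = 0
        · rw [ht0, zero_smul] at ht
          exact li.1 (Subtype.val_injective (by simpa [ht0] using ht))
        · refine li.2 t⁻¹ (Subtype.val_injective ?_)
          push_cast
          rw [ht, smul_smul, inv_mul_cancel₀ ht0, one_smul]
      have h := span_basis_eq b
      have hset : Subtype.val '' Set.range ⇑b = {(↑(b 0) : M2), ↑(b 1)} := by
        ext x
        constructor
        · rintro ⟨w, ⟨i, rfl⟩, rfl⟩
          fin_cases i
          · exact Or.inl rfl
          · exact Or.inr rfl
        · rintro (rfl | rfl)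
          · exact ⟨b 0, ⟨0, rfl⟩, rfl⟩
          · exact ⟨b 1, ⟨1, rfl⟩, rfl⟩
      rw [hset] at h
      exact h.symm
    have hXtr : X.trace = 0 := mem_sl2.1 (hle hXW)
    have hYtr : Y.trace = 0 := mem_sl2.1 (hle hYW)
    have hZtr : (X * Y - Y * X).trace = 0 := by
      rw [Matrix.trace_sub, Matrix.trace_mul_comm, sub_self]
    have hZ0 : X * Y - Y * X ≠ 0 := by
      intro h0
      have hcomm : X * Y = Y * X := by rwa [sub_eq_zero] at h0
      obtain ⟨t, ht⟩ := commute_trace_zero X Y hXtr hYtr hcomm hX0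
      exact hYX t ht
    refine ⟨X * Y - Y * X, hZ0, hZtr, fun g hg => ?_⟩
    have hXmem := hinv g hg X hXW
    have hYmem := hinv g hg Y hYW
    rw [hWspan] at hXmem hYmem
    obtain ⟨a, b', hab⟩ := Submodule.mem_span_pair.1 hXmem
    obtain ⟨c, d, hcd⟩ := Submodule.mem_span_pair.1 hYmem
    refine ⟨a * d - b' * c, ?_⟩
    have expand : (g : M2) * (X * Y - Y * X) * ((g⁻¹ : SL2) : M2)
        = ((g : M2) * X * ((g⁻¹ : SL2) : M2)) * ((g : M2) * Y * ((g⁻¹ : SL2) : M2))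
          - ((g : M2) * Y * ((g⁻¹ : SL2) : M2)) * ((g : M2) * X * ((g⁻¹ : SL2) : M2)) := by
      rw [conj_mul_conj, conj_mul_conj, Matrix.mul_sub, Matrix.sub_mul]
    rw [expand, ← hab, ← hcd]
    simp only [add_mul, mul_add, smul_mul_assoc, mul_smul_comm, smul_smul, sub_smul, smul_sub]
    module

/-- From `g X g⁻¹ = c • X`, get `g * X = c • (X * g)`. -/
lemma conj_eq_smul_mul {g : SL2} {X : M2} {c : ℂ}
    (h : (g : M2) * X * ((g⁻¹ : SL2) : M2) = c • X) :
    (g : M2) * X = c • (X * (g : M2)) := by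
  have := congrArg (· * (g : M2)) h
  beta_reduce at this
  rw [mul_assoc, coe_inv_mul_coe, mul_one, Matrix.smul_mul] at this
  exact this
lemma backward_final (G : Subgroup SL2)
    (hirr : ¬ ∃ v : Fin 2 → ℂ, v ≠ 0 ∧ ∀ g ∈ G,
      ∃ c : ℂ, (g : M2) *ᵥ v = c • v)
    (X₀ : M2) (hX0 : X₀ ≠ 0) (htr : X₀.trace = 0)
    (hc : ∀ g ∈ G, ∃ c : ℂ, (g : M2) * X₀ * ((g⁻¹ : SL2) : M2) = c • X₀) :
    Subgroup.centralizer ((G.map pslProj : Subgroup PSL2) : Set PSL2) ≠ ⊥ := by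
  have hcne : ∀ g ∈ G, ∀ c : ℂ, (g : M2) * X₀ * ((g⁻¹ : SL2) : M2) = c • X₀ → c ≠ 0 := by
    intro g hg c hcg h0
    rw [h0, zero_smul] at hcg
    apply hX0
    have := congrArg (fun M => ((g⁻¹ : SL2) : M2) * M * (g : M2)) hcg
    simp only [Matrix.mul_zero, Matrix.zero_mul] at this
    rw [← mul_assoc, ← mul_assoc, coe_inv_mul_coe, one_mul, mul_assoc,
      coe_inv_mul_coe, mul_one] at this
    exact this
  by_cases hdet : X₀.det = 0
  · exfalso
    apply hirr
    obtain ⟨v, hv, hXv⟩ := Matrix.exists_mulVec_eq_zero_iff.2 hdet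
    refine ⟨v, hv, fun g hg => ?_⟩
    obtain ⟨c, hcg⟩ := hc g hg
    have hc0 := hcne g hg c hcg
    have hg2 := conj_eq_smul_mul hcg
    have hker : X₀ *ᵥ ((g : M2) *ᵥ v) = 0 := by
      rw [Matrix.mulVec_mulVec]
      have hXg : X₀ * (g : M2) = c⁻¹ • ((g : M2) * X₀) := by
        rw [hg2, smul_smul, inv_mul_cancel₀ hc0, one_smul]
      rw [hXg, Matrix.smul_mulVec, ← Matrix.mulVec_mulVec, hXv,
        Matrix.mulVec_zero, smul_zero]
    have hkv := ker_eq_span X₀ hX0 v hv hXv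
    have hmem : (g : M2) *ᵥ v ∈ Submodule.span ℂ {v} := by
      rw [← hkv]
      simpa [LinearMap.mem_ker] using hker
    obtain ⟨cg, hcg2⟩ := Submodule.mem_span_singleton.1 hmem
    exact ⟨cg, hcg2.symm⟩
  · obtain ⟨s, hs⟩ := IsAlgClosed.exists_pow_nat_eq (X₀.det)⁻¹ (n := 2) two_pos
    have hdet1 : (s • X₀).det = 1 := by
      rw [Matrix.det_smul, Fintype.card_fin, hs, inv_mul_cancel₀ hdet]
    set h : SL2 := ⟨s • X₀, hdet1⟩ with hh
    rw [Subgroup.ne_bot_iff_exists_ne_one]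
    have hmemc : pslProj h ∈
        Subgroup.centralizer ((G.map pslProj : Subgroup PSL2) : Set PSL2) := by
      rw [Subgroup.mem_centralizer_iff]
      rintro y hy
      rw [SetLike.mem_coe, Subgroup.mem_map] at hy
      obtain ⟨g, hg, rfl⟩ := hy
      obtain ⟨c, hcg⟩ := hc g hg
      have hc0 := hcne g hg c hcg
      have hc2 : c ^ 2 = 1 := by
        have hdetc := congrArg Matrix.det hcg
        rw [Matrix.det_mul, Matrix.det_mul, Matrix.det_smul,
          Matrix.SpecialLinearGroup.det_coe, Matrix.SpecialLinearGroup.det_coe,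
          one_mul, mul_one, Fintype.card_fin] at hdetc
        exact mul_right_cancel₀ hdet (hdetc.symm.trans (one_mul _).symm)
      have hzdet : ((c : ℂ) • (1 : M2)).det = 1 := by
        rw [Matrix.det_smul, Fintype.card_fin, hc2, Matrix.det_one, mul_one]
      set z : SL2 := ⟨c • 1, hzdet⟩ with hz
      have hzc : z ∈ Subgroup.center SL2 := by
        rw [Matrix.SpecialLinearGroup.mem_center_iff]
        refine ⟨c, by simpa using hc2, ?_⟩
        rw [Matrix.scalar_apply]
        show (diagonal fun _ => c) = c • (1 : M2)
        rw [Matrix.smul_one_eq_diagonal]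
      have key : g * h * z = h * g := by
        apply Subtype.ext
        show (g : M2) * (s • X₀) * (c • 1) = (s • X₀) * (g : M2)
        have hg2 := conj_eq_smul_mul hcg
        have hcc : c * c = 1 := by rw [← pow_two]; exact hc2
        rw [Matrix.mul_smul, Matrix.smul_mul, Matrix.mul_smul, Matrix.mul_one, hg2]
        rw [smul_smul, smul_smul, show c * s * c = s by
          rw [mul_comm c s, mul_assoc, hcc, mul_one]]
      have : pslProj (g * h) = pslProj (h * g) :=
        (QuotientGroup.mk'_eq_mk' _).2 ⟨z, hzc, by rw [mul_assoc] at key ⊢; exact key⟩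
      rw [_root_.map_mul, _root_.map_mul] at this
      exact this
    refine ⟨⟨pslProj h, hmemc⟩, ?_⟩
    intro h1
    have h1' : pslProj h = 1 := by
      rwa [← OneMemClass.coe_eq_one] at h1
    have hcen : h ∈ Subgroup.center SL2 := (QuotientGroup.eq_one_iff h).1 h1'
    obtain ⟨r, hr, hr'⟩ := Matrix.SpecialLinearGroup.mem_center_iff.mp hcen
    have htr2 : ((h : SL2) : M2).trace = 0 := by
      show (s • X₀).trace = 0
      rw [Matrix.trace_smul, htr, smul_zero]
    rw [← hr'] at htr2
    have : (2 : ℂ) * r = 0 := by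
      rw [Matrix.scalar_apply, Matrix.trace_diagonal] at htr2
      simpa [Fin.sum_univ_two, two_mul] using htr2
    have hr0 : r = 0 := (mul_eq_zero.1 this).resolve_left two_ne_zero
    rw [hr0, Fintype.card_fin] at hr
    simp at hr

/-- conjugation by `h` as a linear map on 2×2 matrices -/
noncomputable def conjLin (h : SL2) : M2 →ₗ[ℂ] M2 :=
  (LinearMap.mulRight ℂ ((h⁻¹ : SL2) : M2)).comp (LinearMap.mulLeft ℂ (h : M2))
lemma conjLin_apply (h : SL2) (X : M2) :
    conjLin h X = (h : M2) * X * ((h⁻¹ : SL2) : M2) := rfl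
lemma forward_direction (G : Subgroup SL2) (h : SL2)
    (hcen : h ∉ Subgroup.center SL2)
    (hcomm : ∀ g ∈ G, ∃ z ∈ Subgroup.center SL2, g * h * z = h * g) :
    ∃ W : Submodule ℂ (Matrix (Fin 2) (Fin 2) ℂ), W ≤ sl2 ∧
      (∀ g ∈ G, ∀ X ∈ W,
        (g : Matrix (Fin 2) (Fin 2) ℂ) * X
          * ((g⁻¹ : SpecialLinearGroup (Fin 2) ℂ) : Matrix (Fin 2) (Fin 2) ℂ) ∈ W) ∧
      W ≠ ⊥ ∧ W ≠ sl2 := by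
  -- Ad(h) commutes with Ad(g) for g ∈ G
  have adcomm : ∀ g ∈ G, ∀ X : M2,
      (h : M2) * ((g : M2) * X * ((g⁻¹ : SL2) : M2)) * ((h⁻¹ : SL2) : M2)
        = (g : M2) * ((h : M2) * X * ((h⁻¹ : SL2) : M2)) * ((g⁻¹ : SL2) : M2) := by
    intro g hg X
    obtain ⟨z, hz, heq⟩ := hcomm g hg
    have e1 := conj_mul h g X
    have e2 := conj_mul (g * h) z X
    have e3 := conj_mul g h X
    rw [conj_central z hz X] at e2
    calc (h : M2) * ((g : M2) * X * ((g⁻¹ : SL2) : M2)) * ((h⁻¹ : SL2) : M2)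
        = ((h * g : SL2) : M2) * X * (((h * g)⁻¹ : SL2) : M2) := e1.symm
      _ = ((g * h * z : SL2) : M2) * X * (((g * h * z)⁻¹ : SL2) : M2) := by rw [heq]
      _ = ((g * h : SL2) : M2) * X * (((g * h)⁻¹ : SL2) : M2) := e2
      _ = (g : M2) * ((h : M2) * X * ((h⁻¹ : SL2) : M2)) * ((g⁻¹ : SL2) : M2) := e3
  -- sl2 is invariant under conjLin h
  have hstab : ∀ X ∈ sl2, conjLin h X ∈ sl2 := by
    intro X hX
    rw [mem_sl2] at hX ⊢
    rw [conjLin_apply, trace_conj']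
    exact hX
  haveI : Nontrivial sl2 := by
    refine Submodule.nontrivial_iff_ne_bot.2 ?_
    intro hb
    have : (!![0,1;0,0] : M2) ∈ sl2 := mem_sl2.2 (by simp [Matrix.trace_fin_two])
    rw [hb, Submodule.mem_bot] at this
    have := Matrix.ext_iff.2 this 0 1
    simp at this
  obtain ⟨μ, hμ⟩ := Module.End.exists_eigenvalue
    (LinearMap.restrict (conjLin h) hstab)
  obtain ⟨x, hx⟩ := hμ.exists_hasEigenvector
  refine ⟨sl2 ⊓ LinearMap.ker (conjLin h - μ • LinearMap.id), inf_le_left, ?_, ?_, ?_⟩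
  · -- invariance
    intro g hg X hX
    rw [Submodule.mem_inf] at hX ⊢
    obtain ⟨hX1, hX2⟩ := hX
    rw [LinearMap.mem_ker, LinearMap.sub_apply, LinearMap.smul_apply, LinearMap.id_apply,
      sub_eq_zero, conjLin_apply] at hX2
    constructor
    · rw [mem_sl2, trace_conj']
      exact mem_sl2.1 hX1
    · rw [LinearMap.mem_ker, LinearMap.sub_apply, LinearMap.smul_apply, LinearMap.id_apply,
        sub_eq_zero, conjLin_apply, adcomm g hg X, hX2]
      rw [Matrix.mul_smul, Matrix.smul_mul]
  · -- nonzero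
    intro hb
    have hxmem : (↑x : M2) ∈ sl2 ⊓ LinearMap.ker (conjLin h - μ • LinearMap.id) := by
      rw [Submodule.mem_inf]
      refine ⟨x.2, ?_⟩
      rw [LinearMap.mem_ker, LinearMap.sub_apply, LinearMap.smul_apply, LinearMap.id_apply,
        sub_eq_zero]
      have := hx.apply_eq_smul
      have := congrArg (Subtype.val) this
      simpa [LinearMap.restrict_apply] using this
    rw [hb, Submodule.mem_bot] at hxmem
    exact hx.2 (Submodule.coe_eq_zero.1 hxmem)
  · -- proper
    intro heq
    have hall : ∀ X : M2, X.trace = 0 → (h : M2) * X = μ • (X * (h : M2)) := by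
      intro X hX
      have hXmem : X ∈ sl2 ⊓ LinearMap.ker (conjLin h - μ • LinearMap.id) := by
        rw [heq]; exact mem_sl2.2 hX
      obtain ⟨-, hX2⟩ := Submodule.mem_inf.1 hXmem
      rw [LinearMap.mem_ker, LinearMap.sub_apply, LinearMap.smul_apply, LinearMap.id_apply,
        sub_eq_zero, conjLin_apply] at hX2
      have := congrArg (· * (h : M2)) hX2
      beta_reduce at this
      rw [mul_assoc, coe_inv_mul_coe, mul_one, Matrix.smul_mul] at this
      exact this
    obtain ⟨r, hr⟩ := scalar_of_conj_smul (h : M2) μ h.2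
      (hall _ (by simp [Matrix.trace_fin_two]))
      (hall _ (by simp [Matrix.trace_fin_two]))
      (hall _ (by simp [Matrix.trace_fin_two]))
    apply hcen
    rw [Matrix.SpecialLinearGroup.mem_center_iff]
    refine ⟨r, ?_, ?_⟩
    · have hdet := h.2
      rw [hr, Matrix.det_smul, Matrix.det_one, mul_one, Fintype.card_fin] at hdet
      simpa using hdet
    · rw [Matrix.scalar_apply, hr, Matrix.smul_one_eq_diagonal]


end Sl2Aux

open Sl2Aux in
/-- Let `G ≤ SL(2,ℂ)` have no common eigenvector. Then the centralizer in `PSL(2,ℂ)`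
of the image of `G` is nontrivial if and only if the conjugation action of `G` on
`sl(2,ℂ)` admits a nonzero proper invariant subspace. -/
theorem centralizer_nontrivial_iff_adReducible
    (G : Subgroup (SpecialLinearGroup (Fin 2) ℂ))
    (hirr : ¬ ∃ v : Fin 2 → ℂ, v ≠ 0 ∧ ∀ g ∈ G,
      ∃ c : ℂ, (g : Matrix (Fin 2) (Fin 2) ℂ) *ᵥ v = c • v) :
    Subgroup.centralizer ((G.map pslProj : Subgroup PSL2) : Set PSL2) ≠ ⊥ ↔
    ∃ W : Submodule ℂ (Matrix (Fin 2) (Fin 2) ℂ), W ≤ sl2 ∧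
      (∀ g ∈ G, ∀ X ∈ W,
        (g : Matrix (Fin 2) (Fin 2) ℂ) * X
          * ((g⁻¹ : SpecialLinearGroup (Fin 2) ℂ) : Matrix (Fin 2) (Fin 2) ℂ) ∈ W) ∧
      W ≠ ⊥ ∧ W ≠ sl2 := by
  constructor
  · intro hc
    rw [Subgroup.ne_bot_iff_exists_ne_one] at hc
    obtain ⟨⟨x, hxmem⟩, hxne⟩ := hc
    have hx1 : x ≠ 1 := fun h => hxne (Subtype.ext h)
    obtain ⟨h, rfl⟩ := QuotientGroup.mk'_surjective _ x
    have hcen : h ∉ Subgroup.center (SpecialLinearGroup (Fin 2) ℂ) := by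
      intro hmem
      exact hx1 ((QuotientGroup.eq_one_iff h).2 hmem)
    have hcomm : ∀ g ∈ G, ∃ z ∈ Subgroup.center (SpecialLinearGroup (Fin 2) ℂ),
        g * h * z = h * g := by
      intro g hg
      have hmm : pslProj g ∈ ((G.map pslProj : Subgroup PSL2) : Set PSL2) :=
        SetLike.mem_coe.2 (Subgroup.mem_map_of_mem _ hg)
      have := Subgroup.mem_centralizer_iff.1 hxmem _ hmm
      rw [← _root_.map_mul, ← _root_.map_mul] at this
      exact (QuotientGroup.mk'_eq_mk' _).1 this
    exact forward_direction G h hcen hcomm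
  · rintro ⟨W, hle, hinv, hbot, hne⟩
    obtain ⟨X₀, hX0, htr, hcc⟩ := exists_invariant_line G W hle hinv hbot hne
    exact backward_final G hirr X₀ hX0 htr hcc
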